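/- Let (R,M) be a discrete valuation domain with finite residue field and valuation v, let S ⊆ R be a balanced set with n = |S|, and let A be the partition matrix of the partition C_S associated to S. Then there exists a uniquely determined vector (m_s)_{s∈S} of positive integers with gcd(m_s : s ∈ S) = 1 such that A·(m_s)_{s∈S} = e·(1,…,1)^T for some non-negative integer e. Moreover, if (k_s)_{s∈S} is any vector of positive integers with A·(k_s)_{s∈S} = ẽ·(1,…,1)^T for some non-negative integer ẽ, then there is a positive integer ℓ with k_s = ℓ·m_s for all s ∈ S and ẽ = ℓ·e. -/

import Mathlib

open Polynomial

section Defs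

variable (R K : Type*)

/-- `Int(R) = {F ∈ K[x] ∣ F(R) ⊆ R}`, the ring of integer-valued polynomials,
as a subring of `K[x]`. -/
def intPoly [CommRing R] [CommRing K] [Algebra R K] : Subring (Polynomial K) where
  carrier := {F | ∀ r : R, ∃ a : R, F.eval (algebraMap R K r) = algebraMap R K a}
  mul_mem' := by
    rintro f g hf hg r
    obtain ⟨a, ha⟩ := hf r
    obtain ⟨b, hb⟩ := hg r
    exact ⟨a * b, by simp [ha, hb]⟩
  one_mem' := fun r => ⟨1, by simp⟩
  add_mem' := by
    rintro f g hf hg r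
    obtain ⟨a, ha⟩ := hf r
    obtain ⟨b, hb⟩ := hg r
    exact ⟨a + b, by simp [ha, hb]⟩
  zero_mem' := fun r => ⟨0, by simp⟩
  neg_mem' := by
    rintro f hf r
    obtain ⟨a, ha⟩ := hf r
    exact ⟨-a, by simp [ha]⟩

/-- Polynomials with coefficients in `R` are integer-valued. -/
theorem map_mem_intPoly [CommRing R] [CommRing K] [Algebra R K] (f : Polynomial R) :
    f.map (algebraMap R K) ∈ intPoly R K :=
  fun r => ⟨f.eval r, by rw [Polynomial.eval_map, Polynomial.eval₂_at_apply]⟩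

/-- An element `d` of a commutative monoid is absolutely irreducible if it is irreducible
and, for every `n ≥ 1`, the only factorization of `d ^ n` into irreducibles is, up to order
and unit factors, `d ⋯ d` (`n` copies). -/
def AbsolutelyIrreducible {α : Type*} [CommMonoid α] (d : α) : Prop :=
  Irreducible d ∧ ∀ n : ℕ, 1 ≤ n → ∀ l : Multiset α, (∀ a ∈ l, Irreducible a) →
    l.prod = d ^ n → Multiset.card l = n ∧ ∀ a ∈ l, Associated a d

/-- The fixed divisor of a polynomial `f ∈ R[x]`: the ideal of `R` generated by the
values of `f` on `R`. -/
def fixDiv [CommRing R] (f : Polynomial R) : Ideal R :=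
  Ideal.span (Set.range fun a => f.eval a)

/-- The fixed divisor of an integer-valued polynomial `F ∈ Int(R)`: the ideal of `R`
generated by (the elements of `R` representing) the values of `F` on `R`. -/
def fixDivK [CommRing R] [CommRing K] [Algebra R K] (F : Polynomial K) : Ideal R :=
  Ideal.span {a : R | ∃ r : R, F.eval (algebraMap R K r) = algebraMap R K a}

/-- The (normalized additive) valuation of a nonzero element of a discrete valuation
ring: the largest `n` such that `x ∈ M ^ n`, where `M` is the maximal ideal. -/
noncomputable def mval [CommRing R] [IsLocalRing R] (x : R) : ℕ :=
  sSup {n : ℕ | x ∈ IsLocalRing.maximalIdeal R ^ n}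

open scoped Classical in
/-- The valuation `v : R → ℕ∞`, with `v 0 = ⊤`. -/
noncomputable def vR [CommRing R] [IsLocalRing R] (x : R) : ℕ∞ :=
  if x = 0 then ⊤ else (mval R x : ℕ∞)

open scoped Classical in
/-- The valuation extended to the quotient field `K`, with `v 0 = ⊤`. -/
noncomputable def vK [CommRing R] [IsLocalRing R] [CommRing K] [Algebra R K]
    [IsLocalization (nonZeroDivisors R) K] (x : K) : WithTop ℤ :=
  if x = 0 then ⊤
  else (((mval R (IsLocalization.sec (nonZeroDivisors R) x).1 : ℤ) -
        (mval R ((IsLocalization.sec (nonZeroDivisors R) x).2 : R) : ℤ) : ℤ) : WithTop ℤ)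

/-- The residue class `s + M ^ n` of `s` modulo the `n`-th power of the maximal ideal. -/
def resClass [CommRing R] [IsLocalRing R] (s : R) (n : ℕ) : Set R :=
  {x | x - s ∈ IsLocalRing.maximalIdeal R ^ n}

/-- A finite set `S ⊆ R` is balanced if, letting `n s` for each `s ∈ S` be the minimal
non-negative integer with `(s + M ^ (n s)) ∩ S = {s}`, the residue classes `s + M ^ (n s)`
(`s ∈ S`) are pairwise disjoint and cover `R`. -/
def IsBalanced [CommRing R] [IsLocalRing R] (S : Finset R) : Prop :=
  S.Nonempty ∧
  ∃ n : R → ℕ,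
    (∀ s ∈ S, resClass R s (n s) ∩ (S : Set R) = {s} ∧
      ∀ k : ℕ, resClass R s k ∩ (S : Set R) = {s} → n s ≤ k) ∧
    (∀ s ∈ S, ∀ t ∈ S, s ≠ t → Disjoint (resClass R s (n s)) (resClass R t (n t))) ∧
    (⋃ s ∈ S, resClass R s (n s)) = Set.univ

/-- `ρ` describes the `M`-adic partition `C_S` associated to `S`: the partition of `R`
into the residue classes `s + M ^ (ρ s)`, `s ∈ S`, such that each block contains both a
residue class of `M ^ (ρ s + 1)` intersecting `S` and one disjoint from `S`. -/
def IsSPartition [CommRing R] [IsLocalRing R] (S : Finset R) (ρ : R → ℕ) : Prop :=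
  (⋃ s ∈ S, resClass R s (ρ s)) = Set.univ ∧
  (∀ s ∈ S, ∀ t ∈ S,
    resClass R s (ρ s) = resClass R t (ρ t) ∨
      Disjoint (resClass R s (ρ s)) (resClass R t (ρ t))) ∧
  (∀ s ∈ S,
    (∃ u : R, resClass R u (ρ s + 1) ⊆ resClass R s (ρ s) ∧
      (resClass R u (ρ s + 1) ∩ (S : Set R)).Nonempty) ∧
    (∃ u : R, resClass R u (ρ s + 1) ⊆ resClass R s (ρ s) ∧
      resClass R u (ρ s + 1) ∩ (S : Set R) = ∅))

/-- `S'` is a balanced set associated to `S` (relative to the partition data `ρ` of `C_S`):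
`S' ⊆ S` is balanced, consists of one representative per block of `C_S`, and its associated
partition `C_{S'}` coincides with `C_S`. -/
def IsAssociatedBalancedSubset [CommRing R] [IsLocalRing R] (S S' : Finset R) (ρ : R → ℕ) :
    Prop :=
  S' ⊆ S ∧ IsBalanced R S' ∧
  (∀ s ∈ S', ∀ t ∈ S', s ≠ t → Disjoint (resClass R s (ρ s)) (resClass R t (ρ t))) ∧
  (⋃ s ∈ S', resClass R s (ρ s)) = Set.univ

open scoped Classical in
/-- The partition matrix of the partition `{s + M ^ (ρ s) : s ∈ S}`: diagonal entries
`ρ s`, off-diagonal entries `v (s - t)`. -/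
noncomputable def partitionMatrix [CommRing R] [IsLocalRing R] (S : Finset R) (ρ : R → ℕ) :
    Matrix {x // x ∈ S} {x // x ∈ S} ℤ :=
  Matrix.of fun s t =>
    if (s : R) = (t : R) then (ρ (s : R) : ℤ) else (mval R ((s : R) - (t : R)) : ℤ)

/-- `m` is the vector of multiplicities of the equalizing polynomial of `S`: the unique
vector of positive integers with gcd `1` such that `A · m = e · (1, …, 1)ᵀ` for some
non-negative integer `e`, where `A` is the partition matrix. -/
def IsEqualizingVector [CommRing R] [IsLocalRing R] (S : Finset R) (ρ : R → ℕ) (m : R → ℕ) :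
    Prop :=
  (∀ s ∈ S, 0 < m s) ∧ S.gcd m = 1 ∧
  ∃ e : ℕ, ∀ s : {x // x ∈ S},
    (∑ t : {x // x ∈ S}, partitionMatrix R S ρ s t * (m (t : R) : ℤ)) = (e : ℤ)

/-- `f` is the equalizing polynomial of `S`. -/
def IsEqualizingPoly [CommRing R] [IsLocalRing R] (S : Finset R) (f : Polynomial R) : Prop :=
  ∃ (ρ : R → ℕ) (m : R → ℕ), IsSPartition R S ρ ∧ IsEqualizingVector R S ρ m ∧
    f = ∏ s ∈ S, (Polynomial.X - Polynomial.C s) ^ m s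

/-- The posh set of `f ∈ R[x]`: the set of `r ∈ R` where `v (f r)` exceeds
`min_{t ∈ R} v (f t)`. -/
noncomputable def poshR [CommRing R] [IsLocalRing R] (f : Polynomial R) : Set R :=
  {r : R | (⨅ t : R, vR R (f.eval t)) < vR R (f.eval r)}

/-- The posh set of `F ∈ K[x]`: the set of `r ∈ R` where `v (F r)` exceeds
`min_{t ∈ R} v (F t)`. -/
def poshK [CommRing R] [IsLocalRing R] [CommRing K] [Algebra R K]
    [IsLocalization (nonZeroDivisors R) K] (F : Polynomial K) : Set R :=
  {r : R | ∃ t : R, vK R K (F.eval (algebraMap R K t)) < vK R K (F.eval (algebraMap R K r))}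

/-- `r` lies in an `S`-poor neighborhood of the partition `C_S` (described by `ρ`):
a residue class `r + M ^ (ρ s + 1)` disjoint from `S` inside a block `s + M ^ (ρ s)`. -/
def IsPoorElt [CommRing R] [IsLocalRing R] (S : Finset R) (ρ : R → ℕ) (r : R) : Prop :=
  ∃ s ∈ S, r ∈ resClass R s (ρ s) ∧ resClass R r (ρ s + 1) ∩ (S : Set R) = ∅

/-- The rich set of `S`: the union of the `S`-rich neighborhoods `s + M ^ (ρ s + 1)`,
`s ∈ S`. -/
def richSet [CommRing R] [IsLocalRing R] (S : Finset R) (ρ : R → ℕ) : Set R :=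
  ⋃ s ∈ S, resClass R s (ρ s + 1)

/-- `a` is an `M`-ordering (`P`-ordering) of `R`. -/
def IsMOrdering [CommRing R] [IsLocalRing R] (a : ℕ → R) : Prop :=
  ∀ k : ℕ, ∀ x : R,
    vR R (∏ i ∈ Finset.range k, (a k - a i)) ≤ vR R (∏ i ∈ Finset.range k, (x - a i))

end Defs

section Aux

variable {R : Type*} [CommRing R] [IsDomain R] [IsDiscreteValuationRing R]

lemma mval_mem_iff {x : R} (hx : x ≠ 0) (k : ℕ) :
    x ∈ (IsLocalRing.maximalIdeal R) ^ k ↔ k ≤ mval R x := by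
  obtain ⟨ϖ, hϖ⟩ := IsDiscreteValuationRing.exists_irreducible R
  obtain ⟨n, u, hu⟩ := IsDiscreteValuationRing.eq_unit_mul_pow_irreducible hx hϖ
  have hM : IsLocalRing.maximalIdeal R = Ideal.span {ϖ} :=
    (IsDiscreteValuationRing.irreducible_iff_uniformizer ϖ).1 hϖ
  have hmem : ∀ m : ℕ, (x ∈ (IsLocalRing.maximalIdeal R) ^ m ↔ m ≤ n) := by
    intro m
    rw [hM, Ideal.span_singleton_pow, Ideal.mem_span_singleton, hu]
    constructor
    · intro h
      have h2 : ϖ ^ m ∣ ϖ ^ n := (Units.dvd_mul_left).1 h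
      exact (pow_dvd_pow_iff hϖ.ne_zero hϖ.not_isUnit).1 h2
    · intro h
      exact Dvd.dvd.mul_left (pow_dvd_pow ϖ h) _
  have hset : {m : ℕ | x ∈ (IsLocalRing.maximalIdeal R) ^ m} = Set.Iic n := by
    ext m; simpa using hmem m
  have hval : mval R x = n := by
    rw [mval, hset, csSup_Iic]
  rw [hval]; exact hmem k

lemma mval_neg {x : R} (hx : x ≠ 0) : mval R (-x) = mval R x := by
  have hnx : -x ≠ 0 := neg_ne_zero.2 hx
  apply le_antisymm
  · rw [← mval_mem_iff hx]
    have := (mval_mem_iff hnx (mval R (-x))).2 le_rfl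
    simpa using neg_mem this
  · rw [← mval_mem_iff hnx]
    have := (mval_mem_iff hx (mval R x)).2 le_rfl
    exact neg_mem this

lemma mval_add_ge {x y : R} (hx : x ≠ 0) (hy : y ≠ 0) (hxy : x + y ≠ 0) :
    min (mval R x) (mval R y) ≤ mval R (x + y) := by
  rw [← mval_mem_iff hxy]
  exact add_mem ((mval_mem_iff hx _).2 (min_le_left _ _))
    ((mval_mem_iff hy _).2 (min_le_right _ _))

lemma mem_resClass_iff {s x : R} {n : ℕ} :
    x ∈ resClass R s n ↔ x - s ∈ (IsLocalRing.maximalIdeal R) ^ n := Iff.rfl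

lemma self_mem_resClass (s : R) (n : ℕ) : s ∈ resClass R s n := by
  rw [mem_resClass_iff, sub_self]
  exact zero_mem _

/-- Key structural fact: for a balanced set `S` with associated partition `ρ`,
off-diagonal valuations are strictly smaller than the diagonal entries. -/
lemma diag_gt (S : Finset R) (hS : IsBalanced R S) (ρ : R → ℕ) (hρ : IsSPartition R S ρ) :
    ∀ s ∈ S, ∀ t ∈ S, t ≠ s → mval R (s - t) < ρ s := by
  obtain ⟨hne, nb, hmin, hdisj, hcover⟩ := hS
  obtain ⟨hcov2, hblocks, hsub⟩ := hρ
  intro s hs t ht hts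
  by_contra hcon
  push_neg at hcon
  have hst0 : s - t ≠ 0 := sub_ne_zero.2 (fun h => hts (h.symm))
  have hts0 : t - s ≠ 0 := sub_ne_zero.2 hts
  have htmem : t ∈ resClass R s (ρ s) := by
    rw [mem_resClass_iff]
    rw [mval_mem_iff hts0]
    have : mval R (t - s) = mval R (s - t) := by
      rw [← mval_neg hst0, neg_sub]
    omega
  -- ρ s < nb s
  have hρlt : ρ s < nb s := by
    by_contra hcon2
    push_neg at hcon2
    have hsubcl : resClass R s (ρ s) ⊆ resClass R s (nb s) := by
      intro x hx
      rw [mem_resClass_iff] at hx ⊢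
      exact Ideal.pow_le_pow_right hcon2 hx
    have : t ∈ resClass R s (nb s) ∩ (S : Set R) := ⟨hsubcl htmem, ht⟩
    rw [(hmin s hs).1] at this
    exact hts this
  obtain ⟨-, u, husub, hudisj⟩ := hsub s hs
  have humem : u ∈ resClass R s (ρ s) := husub (self_mem_resClass u _)
  have hucov : u ∈ ⋃ s' ∈ S, resClass R s' (nb s') := by
    rw [hcover]; trivial
  obtain ⟨s', hs', hus'⟩ := Set.mem_iUnion₂.1 hucov
  have hune : u ≠ s' := by
    rintro rfl
    have : u ∈ resClass R u (ρ s + 1) ∩ (S : Set R) := ⟨self_mem_resClass u _, hs'⟩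
    rw [hudisj] at this
    exact this
  have hnbs' : nb s' ≤ ρ s := by
    by_contra hcon3
    push_neg at hcon3
    have : s' ∈ resClass R u (ρ s + 1) ∩ (S : Set R) := by
      refine ⟨?_, hs'⟩
      rw [mem_resClass_iff]
      have h1 : u - s' ∈ (IsLocalRing.maximalIdeal R) ^ (nb s') := hus'
      have h2 : u - s' ∈ (IsLocalRing.maximalIdeal R) ^ (ρ s + 1) :=
        Ideal.pow_le_pow_right hcon3 h1
      simpa using neg_mem h2
    rw [hudisj] at this
    exact this
  have hsmem : s ∈ resClass R s' (nb s') := by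
    rw [mem_resClass_iff]
    have h1 : u - s ∈ (IsLocalRing.maximalIdeal R) ^ (ρ s) := humem
    have h1' : s - u ∈ (IsLocalRing.maximalIdeal R) ^ (nb s') := by
      have := Ideal.pow_le_pow_right hnbs' h1
      simpa using neg_mem this
    have h2 : u - s' ∈ (IsLocalRing.maximalIdeal R) ^ (nb s') := hus'
    have := add_mem h1' h2
    simpa using this
  have : s ∈ resClass R s' (nb s') ∩ (S : Set R) := ⟨hsmem, hs⟩
  rw [(hmin s' hs').1] at this
  have hss' : s = s' := this
  subst hss'
  omega

end Aux

universe u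

lemma keyAux : ∀ (n : ℕ) (ι : Type u) [Fintype ι] [DecidableEq ι], Fintype.card ι ≤ n →
    ∀ A : Matrix ι ι ℤ,
    (∀ s t, A s t = A t s) →
    (∀ s t, 0 ≤ A s t) →
    (∀ r s t : ι, r ≠ s → s ≠ t → r ≠ t → min (A r t) (A t s) ≤ A r s) →
    (∀ s t, s ≠ t → A s t < A s s) →
    (∀ s, 1 ≤ A s s) →
    (∃ x : ι → ℚ, (∀ s, 0 < x s) ∧ ∃ e : ℚ, 0 < e ∧ ∀ s, ∑ t, (A s t : ℚ) * x t = e) ∧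
    (∀ y : ι → ℚ, y ≠ 0 → 0 < ∑ s, ∑ t, (A s t : ℚ) * y s * y t) := by
  intro n
  induction n with
  | zero =>
    intro ι _ _ hcard A _ _ _ _ _
    have : IsEmpty ι := Fintype.card_eq_zero_iff.1 (Nat.le_zero.1 hcard)
    constructor
    · exact ⟨fun _ => 1, fun s => isEmptyElim s, 1, one_pos, fun s => isEmptyElim s⟩
    · intro y hy
      exact absurd (_root_.funext fun s => isEmptyElim s) hy
  | succ n IH =>
    intro ι _ _ hcard A hsym hnn hultra hdiag hdiag1
    by_cases hlt : 1 < Fintype.card ι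
    swap
    · -- card ≤ 1
      rcases Nat.le_one_iff_eq_zero_or_eq_one.1 (not_lt.1 hlt) with h0 | h1
      · have : IsEmpty ι := Fintype.card_eq_zero_iff.1 h0
        constructor
        · exact ⟨fun _ => 1, fun s => isEmptyElim s, 1, one_pos, fun s => isEmptyElim s⟩
        · intro y hy
          exact absurd (_root_.funext fun s => isEmptyElim s) hy
      · obtain ⟨a, ha⟩ := Fintype.card_eq_one_iff.1 h1
        have hsum : ∀ (f : ι → ℚ), ∑ t, f t = f a := by
          intro f
          apply Finset.sum_eq_single_of_mem a (Finset.mem_univ a)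
          intro b _ hb
          exact absurd (ha b) hb
        constructor
        · refine ⟨fun _ => 1, fun _ => one_pos, (A a a : ℚ), ?_, ?_⟩
          · exact_mod_cast Int.lt_iff_add_one_le.2 (by simpa using hdiag1 a)
          · intro s
            rw [hsum]
            rw [ha s]
            simp
        · intro y hy
          have hya : y a ≠ 0 := by
            intro h
            exact hy (funext fun b => (ha b) ▸ h)
          rw [hsum, hsum]
          have h1 : (0:ℚ) < (A a a : ℚ) := by
            exact_mod_cast Int.lt_iff_add_one_le.2 (by simpa using hdiag1 a)
          calc (0:ℚ) < (A a a : ℚ) * (y a * y a) := mul_pos h1 (mul_self_pos.2 hya)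
            _ = (A a a : ℚ) * y a * y a := by ring
    · -- main case: 1 < card ι
      haveI : Nontrivial ι := Fintype.one_lt_card_iff_nontrivial.1 hlt
      obtain ⟨a0, b0, hab0⟩ := Fintype.exists_pair_of_one_lt_card hlt
      set P : Finset (ι × ι) := Finset.univ.filter (fun p => p.1 ≠ p.2) with hP
      have hPne : P.Nonempty := ⟨(a0, b0), by simp [hP, hab0]⟩
      set μ : ℤ := P.inf' hPne (fun p => A p.1 p.2) with hμ
      have hμle : ∀ s t : ι, s ≠ t → μ ≤ A s t := by
        intro s t hst
        have hmem : (s, t) ∈ P := by simp [hP, hst]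
        exact Finset.inf'_le (fun p => A p.1 p.2) hmem
      obtain ⟨p0, hp0P, hp0⟩ := Finset.exists_mem_eq_inf' hPne (fun p => A p.1 p.2)
      have hp0ne : p0.1 ≠ p0.2 := by simpa [hP] using hp0P
      have hμnn : 0 ≤ μ := by rw [hμ, hp0]; exact hnn _ _
      have hμAss : ∀ s : ι, μ < A s s := by
        intro s
        obtain ⟨t, ht⟩ := exists_ne s
        exact lt_of_le_of_lt (hμle s t (Ne.symm ht)) (hdiag s t (Ne.symm ht))
      have htrans : ∀ {a b c : ι}, (a = b ∨ μ < A a b) → (b = c ∨ μ < A b c) →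
          (a = c ∨ μ < A a c) := by
        rintro a b c (rfl | hab) (rfl | hbc)
        · exact Or.inl rfl
        · exact Or.inr hbc
        · exact Or.inr hab
        · rcases eq_or_ne a c with rfl | hac
          · exact Or.inl rfl
          · rcases eq_or_ne a b with rfl | hab'
            · exact Or.inr hbc
            · rcases eq_or_ne b c with rfl | hbc'
              · exact Or.inr hab
              · refine Or.inr (lt_of_lt_of_le ?_ (hultra a c b hac (Ne.symm hbc') hab'))
                exact lt_min hab hbc
      let sd : Setoid ι := ⟨fun s t => s = t ∨ μ < A s t,
        ⟨fun s => Or.inl rfl,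
         fun {s t} h => by
            rcases h with rfl | h
            · exact Or.inl rfl
            · exact Or.inr (hsym t s ▸ h),
         htrans⟩⟩
      letI : DecidableRel sd.r := fun a b => Classical.dec _
      letI : DecidableEq (Quotient sd) := @Quotient.decidableEq ι sd _
      letI : Fintype (Quotient sd) := Quotient.fintype sd
      set π : ι → Quotient sd := Quotient.mk sd with hπ
      have hrel : ∀ {s t : ι}, π s = π t → s = t ∨ μ < A s t := fun {s t} h => Quotient.exact h
      have hsound : ∀ {s t : ι}, μ < A s t → π s = π t := fun {s t} h => Quotient.sound (Or.inr h)
      have hπne : π p0.1 ≠ π p0.2 := by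
        intro h
        rcases hrel h with h' | h'
        · exact hp0ne h'
        · rw [← hp0] at h'
          exact lt_irrefl _ h'
      have hcardq : ∀ q : Quotient sd, Fintype.card {t : ι // π t = q} ≤ n := by
        intro q
        have hex : ∃ t, π t ≠ q := by
          rcases eq_or_ne (π p0.1) q with h | h
          · exact ⟨p0.2, fun h2 => hπne (h.trans h2.symm)⟩
          · exact ⟨p0.1, h⟩
        obtain ⟨t, ht⟩ := hex
        have := Fintype.card_subtype_lt (p := fun t => π t = q) ht
        exact Nat.lt_succ_iff.mp (lt_of_lt_of_le this hcard)
      have hclass : ∀ (q : Quotient sd) (s t : {t : ι // π t = q}), μ < A s.1 t.1 := by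
        intro q s t
        rcases hrel (s.2.trans t.2.symm) with h | h
        · exact h ▸ hμAss s.1
        · exact h
      have hkey : ∀ q : Quotient sd,
          (∃ x : {t : ι // π t = q} → ℚ, (∀ s, 0 < x s) ∧ ∃ e : ℚ, 0 < e ∧
            ∀ s, ∑ t, ((Matrix.of (fun s t : {t : ι // π t = q} => A s.1 t.1 - μ)) s t : ℚ) * x t = e) ∧
          (∀ y : {t : ι // π t = q} → ℚ, y ≠ 0 →
            0 < ∑ s, ∑ t, ((Matrix.of (fun s t : {t : ι // π t = q} => A s.1 t.1 - μ)) s t : ℚ) * y s * y t) := by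
        intro q
        apply IH _ (hcardq q)
        · intro s t; simp only [Matrix.of_apply]; rw [hsym s.1 t.1]
        · intro s t; simp only [Matrix.of_apply]; have := hclass q s t; omega
        · intro r s t hrs hst hrt
          simp only [Matrix.of_apply, min_sub_sub_right]
          have : r.1 ≠ s.1 := fun h => hrs (Subtype.ext h)
          have h2 : s.1 ≠ t.1 := fun h => hst (Subtype.ext h)
          have h3 : r.1 ≠ t.1 := fun h => hrt (Subtype.ext h)
          have := hultra r.1 s.1 t.1 this h2 h3
          omega
        · intro s t hst
          simp only [Matrix.of_apply]
          have : s.1 ≠ t.1 := fun h => hst (Subtype.ext h)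
          have := hdiag s.1 t.1 this
          omega
        · intro s
          simp only [Matrix.of_apply]
          have := hμAss s.1
          omega
      choose hex hPDq using hkey
      choose xq hxqpos ebl heblpos hrowq using hex
      set x : ι → ℚ := fun t => (ebl (π t))⁻¹ * xq (π t) ⟨t, rfl⟩ with hxdef
      have hxpos : ∀ t, 0 < x t := fun t => mul_pos (inv_pos.2 (heblpos _)) (hxqpos _ _)
      have hxval : ∀ (q : Quotient sd) (t : {t : ι // π t = q}),
          x t.1 = (ebl q)⁻¹ * xq q t := by
        rintro q ⟨tv, rfl⟩
        rfl
      -- splitting lemma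
      have hsplit : ∀ (w : ι → ℚ) (s : ι),
          ∑ t, (A s t : ℚ) * w t
            = (μ : ℚ) * (∑ t, w t)
              + ∑ t : {t : ι // π t = π s}, ((A s t.1 : ℚ) - (μ : ℚ)) * w t.1 := by
        intro w s
        have h1 : ∀ t : ι, (A s t : ℚ) * w t
            = (μ : ℚ) * w t + (if π t = π s then ((A s t : ℚ) - (μ : ℚ)) * w t else 0) := by
          intro t
          by_cases h : π t = π s
          · simp only [h, if_pos]
            ring
          · have hts : s ≠ t := fun he => h (he ▸ rfl)
            have hAst : A s t = μ := by
              refine le_antisymm ?_ (hμle s t hts)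
              by_contra hcon
              push_neg at hcon
              exact h (hsound (by rwa [hsym t s]) )
            rw [if_neg h, hAst]
            ring
        rw [Finset.sum_congr rfl (fun t _ => h1 t), Finset.sum_add_distrib, ← Finset.mul_sum]
        congr 1
        rw [← Finset.sum_filter]
        exact Finset.sum_subtype _ (fun t => by simp) (fun t => ((A s t : ℚ) - (μ : ℚ)) * w t)
      have hrow : ∀ s : ι, ∑ t, (A s t : ℚ) * x t = (μ : ℚ) * (∑ t, x t) + 1 := by
        intro s
        rw [hsplit x s]
        congr 1
        have hr := hrowq (π s) ⟨s, rfl⟩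
        calc ∑ t : {t : ι // π t = π s}, ((A s t.1 : ℚ) - (μ : ℚ)) * x t.1
            = ∑ t : {t : ι // π t = π s},
                (ebl (π s))⁻¹ * (((Matrix.of (fun s' t' : {t : ι // π t = π s} => A s'.1 t'.1 - μ)) ⟨s, rfl⟩ t : ℚ) * xq (π s) t) := by
              refine Finset.sum_congr rfl fun t _ => ?_
              rw [hxval (π s) t]
              simp only [Matrix.of_apply]
              push_cast
              ring
          _ = (ebl (π s))⁻¹ * (ebl (π s)) := by rw [← Finset.mul_sum, hr]
          _ = 1 := inv_mul_cancel₀ (ne_of_gt (heblpos _))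
      constructor
      · -- existence
        refine ⟨x, hxpos, (μ : ℚ) * (∑ t, x t) + 1, ?_, hrow⟩
        have hT : 0 < ∑ t, x t :=
          Finset.sum_pos (fun t _ => hxpos t) Finset.univ_nonempty
        have : (0:ℚ) ≤ (μ : ℚ) := by exact_mod_cast hμnn
        positivity
      · -- positive definiteness
        intro y hy
        have hform : ∑ s, ∑ t, (A s t : ℚ) * y s * y t
            = (μ : ℚ) * (∑ t, y t) * (∑ t, y t)
              + ∑ q : Quotient sd, ∑ s : {t : ι // π t = q}, ∑ t : {t : ι // π t = q},
                  ((A s.1 t.1 : ℚ) - (μ : ℚ)) * y s.1 * y t.1 := by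
          have h1 : ∀ s, ∑ t, (A s t : ℚ) * y s * y t
              = y s * ((μ : ℚ) * (∑ t, y t))
                + y s * (∑ t : {t : ι // π t = π s}, ((A s t.1 : ℚ) - (μ : ℚ)) * y t.1) := by
            intro s
            have h2 : ∑ t, (A s t : ℚ) * y s * y t = y s * ∑ t, (A s t : ℚ) * y t := by
              rw [Finset.mul_sum]
              exact Finset.sum_congr rfl fun t _ => by ring
            rw [h2, hsplit y s, mul_add]
          rw [Finset.sum_congr rfl (fun s _ => h1 s), Finset.sum_add_distrib]
          congr 1
          · rw [← Finset.sum_mul]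
            ring
          · rw [← Fintype.sum_fiberwise π
              (fun s => y s * (∑ t : {t : ι // π t = π s}, ((A s t.1 : ℚ) - (μ : ℚ)) * y t.1))]
            refine Finset.sum_congr rfl fun q _ => Finset.sum_congr rfl fun s _ => ?_
            obtain ⟨sv, rfl⟩ := s
            rw [Finset.mul_sum]
            exact Finset.sum_congr rfl fun t _ => by ring
        rw [hform]
        have hblocknn : ∀ q : Quotient sd,
            0 ≤ ∑ s : {t : ι // π t = q}, ∑ t : {t : ι // π t = q},
                ((A s.1 t.1 : ℚ) - (μ : ℚ)) * y s.1 * y t.1 := by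
          intro q
          by_cases hz : (fun t : {t : ι // π t = q} => y t.1) = 0
          · apply le_of_eq
            symm
            refine Finset.sum_eq_zero fun s _ => Finset.sum_eq_zero fun t _ => ?_
            have : y t.1 = 0 := congrFun hz t
            rw [this, mul_zero]
          · have := hPDq q _ hz
            refine le_of_lt (lt_of_lt_of_eq this ?_)
            refine Finset.sum_congr rfl fun s _ => Finset.sum_congr rfl fun t _ => ?_
            simp only [Matrix.of_apply]
            push_cast
            ring
        have hexs : ∃ s : ι, y s ≠ 0 := Function.ne_iff.1 hy
        obtain ⟨s0, hs0⟩ := hexs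
        have hblockpos : 0 < ∑ s : {t : ι // π t = π s0}, ∑ t : {t : ι // π t = π s0},
            ((A s.1 t.1 : ℚ) - (μ : ℚ)) * y s.1 * y t.1 := by
          have hz : (fun t : {t : ι // π t = π s0} => y t.1) ≠ 0 := by
            intro h
            exact hs0 (congrFun h ⟨s0, rfl⟩)
          have := hPDq (π s0) _ hz
          refine lt_of_lt_of_eq this ?_
          refine Finset.sum_congr rfl fun s _ => Finset.sum_congr rfl fun t _ => ?_
          simp only [Matrix.of_apply]
          push_cast
          ring
        have hsumpos : 0 < ∑ q : Quotient sd, ∑ s : {t : ι // π t = q}, ∑ t : {t : ι // π t = q},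
            ((A s.1 t.1 : ℚ) - (μ : ℚ)) * y s.1 * y t.1 :=
          Finset.sum_pos' (fun q _ => hblocknn q) ⟨π s0, Finset.mem_univ _, hblockpos⟩
        have hfirst : (0:ℚ) ≤ (μ : ℚ) * (∑ t, y t) * (∑ t, y t) := by
          have h0 : (0:ℚ) ≤ (μ : ℚ) := by exact_mod_cast hμnn
          rw [mul_assoc]
          exact mul_nonneg h0 (mul_self_nonneg _)
        linarith


/-- For a balanced set `S` with partition matrix `A` there is a uniquely
determined vector `(m s)_{s ∈ S}` of positive integers with gcd `1` such that
`A · m = e · (1,…,1)ᵀ` for some non-negative integer `e`; moreover every positive integer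
solution `(k s)` of `A · k = ẽ · (1,…,1)ᵀ` satisfies `k = ℓ · m` and `ẽ = ℓ · e` for some
positive integer `ℓ`. -/
theorem statement19 (R : Type*) [CommRing R] [IsDomain R] [IsDiscreteValuationRing R]
    [Finite (IsLocalRing.ResidueField R)]
    (S : Finset R) (hS : IsBalanced R S)
    (ρ : R → ℕ) (hρ : IsSPartition R S ρ) :
    ∃ (m : R → ℕ) (e : ℕ),
      (∀ s ∈ S, 0 < m s) ∧ S.gcd m = 1 ∧
      (∀ s : {x // x ∈ S},
        (∑ t : {x // x ∈ S}, partitionMatrix R S ρ s t * (m (t : R) : ℤ)) = (e : ℤ)) ∧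
      (∀ (m' : R → ℕ) (e' : ℕ), (∀ s ∈ S, 0 < m' s) → S.gcd m' = 1 →
        (∀ s : {x // x ∈ S},
          (∑ t : {x // x ∈ S}, partitionMatrix R S ρ s t * (m' (t : R) : ℤ)) = (e' : ℤ)) →
        ∀ s ∈ S, m' s = m s) ∧
      (∀ (k : R → ℕ) (e' : ℕ), (∀ s ∈ S, 0 < k s) →
        (∀ s : {x // x ∈ S},
          (∑ t : {x // x ∈ S}, partitionMatrix R S ρ s t * (k (t : R) : ℤ)) = (e' : ℤ)) →
        ∃ l : ℕ, 0 < l ∧ (∀ s ∈ S, k s = l * m s) ∧ e' = l * e) := by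
  classical
  have hSne : S.Nonempty := hS.1
  by_cases hc : S.card ≤ 1
  · -- singleton case
    obtain ⟨s0, hs0⟩ := Finset.card_eq_one.1 (le_antisymm hc (Finset.one_le_card.2 hSne))
    have hs0S : s0 ∈ S := by rw [hs0]; exact Finset.mem_singleton_self s0
    have hall : ∀ r ∈ S, r = s0 := fun r hr => Finset.mem_singleton.1 (hs0 ▸ hr)
    set a : {x // x ∈ S} := ⟨s0, hs0S⟩ with ha
    have huniq : ∀ b : {x // x ∈ S}, b = a := fun b => Subtype.ext (hall b.1 b.2)
    have hsum : ∀ f : {x // x ∈ S} → ℤ, ∑ t, f t = f a := fun f =>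
      Finset.sum_eq_single_of_mem a (Finset.mem_univ a) (fun b _ hb => absurd (huniq b) hb)
    have hentry : partitionMatrix R S ρ a a = (ρ s0 : ℤ) := by
      simp [partitionMatrix, ha]
    refine ⟨fun _ => 1, ρ s0, fun s _ => one_pos, ?_, ?_, ?_, ?_⟩
    · exact Nat.dvd_one.1 (Finset.gcd_dvd (f := fun _ => (1:ℕ)) hs0S)
    · intro s
      rw [hsum, huniq s, hentry]
      simp
    · intro m' e' hpos' hgcd' hrow' s hs
      rw [hs0, Finset.gcd_singleton] at hgcd'
      simpa using (hall s hs) ▸ (by simpa using hgcd')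
    · intro k e' hkpos hkrow
      have hr := hkrow a
      rw [hsum, hentry] at hr
      refine ⟨k s0, hkpos s0 hs0S, ?_, ?_⟩
      · intro s hs
        rw [hall s hs]
        simp
      · have : (e' : ℤ) = (k s0 : ℤ) * (ρ s0 : ℤ) := by rw [← hr]; ring
        exact_mod_cast this
  · -- main case
    push_neg at hc
    haveI : Nonempty {x // x ∈ S} := ⟨⟨hSne.choose, hSne.choose_spec⟩⟩
    set A : Matrix {x // x ∈ S} {x // x ∈ S} ℤ := partitionMatrix R S ρ with hA
    have hvalne : ∀ s t : {x // x ∈ S}, s ≠ t → (s : R) ≠ (t : R) :=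
      fun s t hst h => hst (Subtype.ext h)
    have hAoff : ∀ s t : {x // x ∈ S}, s ≠ t → A s t = (mval R ((s:R) - (t:R)) : ℤ) := by
      intro s t hst
      simp [hA, partitionMatrix, hvalne s t hst, hst]
    have hAdiagE : ∀ s : {x // x ∈ S}, A s s = (ρ (s:R) : ℤ) := by
      intro s
      simp [hA, partitionMatrix]
    have hdg := diag_gt S hS ρ hρ
    have hsym : ∀ s t : {x // x ∈ S}, A s t = A t s := by
      intro s t
      rcases eq_or_ne s t with rfl | hst
      · rfl
      · rw [hAoff s t hst, hAoff t s hst.symm]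
        have h0 : (s:R) - (t:R) ≠ 0 := sub_ne_zero.2 (hvalne s t hst)
        rw [← mval_neg h0, neg_sub]
    have hnn : ∀ s t : {x // x ∈ S}, 0 ≤ A s t := by
      intro s t
      rcases eq_or_ne s t with rfl | hst
      · rw [hAdiagE]; exact Int.ofNat_nonneg _
      · rw [hAoff s t hst]; exact Int.ofNat_nonneg _
    have hultra : ∀ r s t : {x // x ∈ S}, r ≠ s → s ≠ t → r ≠ t →
        min (A r t) (A t s) ≤ A r s := by
      intro r s t hrs hst hrt
      rw [hAoff r t hrt, hAoff t s hst.symm, hAoff r s hrs]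
      have h1 : (r:R) - (t:R) ≠ 0 := sub_ne_zero.2 (hvalne r t hrt)
      have h2 : (t:R) - (s:R) ≠ 0 := sub_ne_zero.2 (hvalne t s hst.symm)
      have h3 : ((r:R) - (t:R)) + ((t:R) - (s:R)) ≠ 0 := by
        rw [sub_add_sub_cancel]
        exact sub_ne_zero.2 (hvalne r s hrs)
      have := mval_add_ge h1 h2 h3
      rw [sub_add_sub_cancel] at this
      rw [← Nat.cast_min]
      exact_mod_cast this
    have hdiagA : ∀ s t : {x // x ∈ S}, s ≠ t → A s t < A s s := by
      intro s t hst
      rw [hAoff s t hst, hAdiagE]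
      exact_mod_cast hdg (s:R) s.2 (t:R) t.2 (hvalne t s hst.symm)
    have hdiag1 : ∀ s : {x // x ∈ S}, 1 ≤ A s s := by
      intro s
      obtain ⟨b, hbS, hbne⟩ := Finset.exists_mem_ne hc (s:R)
      have := hdg (s:R) s.2 b hbS hbne
      rw [hAdiagE]
      exact_mod_cast Nat.one_le_iff_ne_zero.2 (by omega)
    obtain ⟨⟨x, hxpos, e0, he0pos, hxrow⟩, hPD⟩ :=
      keyAux (Fintype.card {x // x ∈ S}) {x // x ∈ S} le_rfl A hsym hnn hultra hdiagA hdiag1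
    have hinj : ∀ y : {x // x ∈ S} → ℚ, (∀ s, ∑ t, (A s t : ℚ) * y t = 0) → y = 0 := by
      intro y hy
      by_contra h
      have hp := hPD y h
      have hzero : ∑ s, ∑ t, (A s t : ℚ) * y s * y t = 0 := by
        refine Finset.sum_eq_zero fun s _ => ?_
        have h2 : ∑ t, (A s t : ℚ) * y s * y t = y s * ∑ t, (A s t : ℚ) * y t := by
          rw [Finset.mul_sum]
          exact Finset.sum_congr rfl fun t _ => by ring
        rw [h2, hy s, mul_zero]
      rw [hzero] at hp
      exact lt_irrefl _ hp
    -- make the solution integral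
    set D : ℕ := ∏ t : {x // x ∈ S}, (x t).den with hDdef
    have hDpos : 0 < D := Finset.prod_pos fun t _ => (x t).pos
    set w : {x // x ∈ S} → ℤ := fun t => (x t).num * ((D / (x t).den : ℕ) : ℤ) with hwdef
    have hwq : ∀ t, (w t : ℚ) = (D : ℚ) * x t := by
      intro t
      have hdvd : (x t).den ∣ D := Finset.dvd_prod_of_mem _ (Finset.mem_univ t)
      have h1 : ((x t).den : ℚ) * ((D / (x t).den : ℕ) : ℚ) = (D : ℚ) := by
        rw [← Nat.cast_mul, Nat.mul_div_cancel' hdvd]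
      have h2 : x t * ((x t).den : ℚ) = ((x t).num : ℚ) := Rat.mul_den_eq_num (x t)
      rw [hwdef]
      rw [Int.cast_mul, Int.cast_natCast, ← h2, ← h1]
      ring
    have hwpos : ∀ t, 0 < w t := by
      intro t
      have hq : (0:ℚ) < (w t : ℚ) := by
        rw [hwq]
        have : (0:ℚ) < (D:ℚ) := by exact_mod_cast hDpos
        exact mul_pos this (hxpos t)
      exact_mod_cast hq
    have hwrowq : ∀ s : {x // x ∈ S},
        ((∑ t, A s t * w t : ℤ) : ℚ) = (D : ℚ) * e0 := by
      intro s
      push_cast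
      calc ∑ t, (A s t : ℚ) * (w t : ℚ) = ∑ t, (D : ℚ) * ((A s t : ℚ) * x t) := by
            refine Finset.sum_congr rfl fun t _ => ?_
            rw [hwq]
            ring
        _ = (D : ℚ) * ∑ t, (A s t : ℚ) * x t := by rw [Finset.mul_sum]
        _ = (D : ℚ) * e0 := by rw [hxrow s]
    obtain s1 : {x // x ∈ S} := Classical.arbitrary _
    set V : ℤ := ∑ t, A s1 t * w t with hVdef
    have hVall : ∀ s : {x // x ∈ S}, ∑ t, A s t * w t = V := by
      intro s
      have := (hwrowq s).trans (hwrowq s1).symm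
      exact_mod_cast this
    have hVpos : 0 < V := by
      have hq : (0:ℚ) < (V : ℚ) := by
        rw [hVdef, hwrowq s1]
        have : (0:ℚ) < (D:ℚ) := by exact_mod_cast hDpos
        exact mul_pos this he0pos
      exact_mod_cast hq
    set wn : R → ℕ := fun r => if h : r ∈ S then (w ⟨r, h⟩).toNat else 1 with hwndef
    have hwn : ∀ s : {x // x ∈ S}, wn (s : R) = (w s).toNat := by
      intro s
      simp only [hwndef, s.2, dif_pos, Subtype.coe_eta]
    have hwncast : ∀ s : {x // x ∈ S}, (wn (s : R) : ℤ) = w s := by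
      intro s
      rw [hwn]
      exact Int.toNat_of_nonneg (hwpos s).le
    set g : ℕ := S.gcd wn with hgdef
    have hgdvd : ∀ s : {x // x ∈ S}, g ∣ wn (s : R) := fun s => Finset.gcd_dvd s.2
    have hgpos : 0 < g := by
      rcases Nat.eq_zero_or_pos g with h | h
      · exfalso
        have h0 : wn (s1 : R) = 0 := Finset.gcd_eq_zero_iff.1 h _ s1.2
        have h1 := hwncast s1
        rw [h0] at h1
        have := hwpos s1
        omega
      · exact h
    set m : R → ℕ := fun r => wn r / g with hmdef
    have hm : ∀ s : {x // x ∈ S}, wn (s : R) = g * m (s : R) :=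
      fun s => (Nat.mul_div_cancel' (hgdvd s)).symm
    have hmpos : ∀ s ∈ S, 0 < m s := by
      intro s hs
      have h1 := hwncast ⟨s, hs⟩
      have h2 := hwpos ⟨s, hs⟩
      have h3 := hm ⟨s, hs⟩
      simp only at h1 h3
      rcases Nat.eq_zero_or_pos (m s) with h | h
      · rw [h, mul_zero] at h3
        rw [h3] at h1
        simp at h1
        omega
      · exact h
    have hgE : ∀ s : {x // x ∈ S}, (g : ℤ) * (∑ t, A s t * (m (t : R) : ℤ)) = V := by
      intro s
      rw [← hVall s, Finset.mul_sum]
      refine Finset.sum_congr rfl fun t _ => ?_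
      rw [← hwncast t, hm t]
      push_cast
      ring
    set E0 : ℤ := ∑ t, A s1 t * (m (t : R) : ℤ) with hE0def
    have hrowsE : ∀ s : {x // x ∈ S}, ∑ t, A s t * (m (t : R) : ℤ) = E0 := by
      intro s
      have h1 := (hgE s).trans (hgE s1).symm
      have hg0 : (g : ℤ) ≠ 0 := by exact_mod_cast hgpos.ne'
      exact mul_left_cancel₀ hg0 h1
    have hE0pos : 0 < E0 := by
      have h1 := hgE s1
      nlinarith [hVpos, h1]
    set e : ℕ := E0.toNat with hedef
    have hecast : (e : ℤ) = E0 := Int.toNat_of_nonneg hE0pos.le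
    have hepos : 0 < e := by omega
    have hrows : ∀ s : {x // x ∈ S}, ∑ t, A s t * (m (t : R) : ℤ) = (e : ℤ) := by
      intro s
      rw [hecast]
      exact hrowsE s
    have hgcdm : S.gcd m = 1 := by
      have hdvd1 : S.gcd m * g ∣ g := by
        have h1 : ∀ r ∈ S, S.gcd m * g ∣ wn r := by
          intro r hr
          obtain ⟨c, hc⟩ := Finset.gcd_dvd (f := m) hr
          have h2 : wn r = g * m r := hm ⟨r, hr⟩
          rw [h2, hc]
          exact ⟨c, by ring⟩
        exact Finset.dvd_gcd h1
      have h2 : S.gcd m * g ∣ 1 * g := by rwa [one_mul]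
      have h3 : S.gcd m ∣ 1 := (Nat.mul_dvd_mul_iff_right hgpos).1 h2
      exact Nat.dvd_one.1 h3
    -- scaling property
    have hscale : ∀ (k : R → ℕ) (e' : ℕ), (∀ s ∈ S, 0 < k s) →
        (∀ s : {x // x ∈ S}, ∑ t, A s t * (k (t : R) : ℤ) = (e' : ℤ)) →
        ∃ l : ℕ, 0 < l ∧ (∀ s ∈ S, k s = l * m s) ∧ e' = l * e := by
      intro k e' hkpos hkrow
      have hknum : ∀ s : {x // x ∈ S}, (e : ℚ) * (k (s : R) : ℚ) = (e' : ℚ) * (m (s : R) : ℚ) := by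
        have hzero : (fun t : {x // x ∈ S} =>
            (e : ℚ) * (k (t : R) : ℚ) - (e' : ℚ) * (m (t : R) : ℚ)) = 0 := by
          apply hinj
          intro s
          have h1 : ∑ t, (A s t : ℚ) * ((e : ℚ) * (k (t : R) : ℚ) - (e' : ℚ) * (m (t : R) : ℚ))
              = (e : ℚ) * (∑ t, (A s t : ℚ) * (k (t : R) : ℚ))
                - (e' : ℚ) * (∑ t, (A s t : ℚ) * (m (t : R) : ℚ)) := by
            rw [Finset.mul_sum, Finset.mul_sum, ← Finset.sum_sub_distrib]
            exact Finset.sum_congr rfl fun t _ => by ring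
          rw [h1]
          have h2 : ∑ t, (A s t : ℚ) * (k (t : R) : ℚ) = (e' : ℚ) := by
            exact_mod_cast congrArg (fun z : ℤ => (z : ℚ)) (hkrow s)
          have h3 : ∑ t, (A s t : ℚ) * (m (t : R) : ℚ) = (e : ℚ) := by
            exact_mod_cast congrArg (fun z : ℤ => (z : ℚ)) (hrows s)
          rw [h2, h3]
          ring
        intro s
        have := congrFun hzero s
        simpa [sub_eq_zero] using this
      have hknat : ∀ s ∈ S, e * k s = e' * m s := by
        intro s hs
        exact_mod_cast hknum ⟨s, hs⟩
      refine ⟨S.gcd k, ?_, ?_, ?_⟩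
      case _ =>
        rcases Nat.eq_zero_or_pos (S.gcd k) with h | h
        · exfalso
          have h0 : k (s1 : R) = 0 := Finset.gcd_eq_zero_iff.1 h _ s1.2
          have := hkpos (s1 : R) s1.2
          omega
        · exact h
      all_goals {
        have hgcdk : e * S.gcd k = e' := by
          have h1 : S.gcd (fun s => e * k s) = e * S.gcd k := by
            rw [Finset.gcd_mul_left]
            simp
          have h2 : S.gcd (fun s => e * k s) = S.gcd (fun s => e' * m s) :=
            Finset.gcd_congr rfl hknat
          have h3 : S.gcd (fun s => e' * m s) = e' * S.gcd m := by
            rw [Finset.gcd_mul_left]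
            simp
          rw [hgcdm, mul_one] at h3
          rw [← h1, h2, h3]
        first
          | (intro s hs
             have h4 : e * k s = e * (S.gcd k * m s) := by
               rw [hknat s hs, ← hgcdk]
               ring
             exact Nat.eq_of_mul_eq_mul_left hepos h4)
          | (rw [← hgcdk]; exact Nat.mul_comm e _)
      }
    refine ⟨m, e, hmpos, hgcdm, hrows, ?_, hscale⟩
    intro m' e' hpos' hgcd' hrow' s hs
    obtain ⟨l, hlpos, hlm, hle⟩ := hscale m' e' hpos' hrow'
    have hl1 : l = 1 := by
      have h1 : S.gcd m' = S.gcd (fun s => l * m s) := Finset.gcd_congr rfl hlm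
      have h2 : S.gcd (fun s => l * m s) = l * S.gcd m := by
        rw [Finset.gcd_mul_left]
        simp
      rw [hgcdm, mul_one] at h2
      rw [hgcd'] at h1
      omega
    rw [hlm s hs, hl1, one_mul]
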